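/- arXiv:2205.10500 — 8 statements merged into one kernel-verified Lean document; each statement's English description precedes it below -/
import Mathlib

section
/- For any real matrix X of size n×p, with A(X) := (1/8) X (15 I_p - 10 X^T X + 3 (X^T X)^2), it holds that A(X)^T A(X) - I_p = (1/64) (X^T X - I_p)^3 (9 (X^T X)^2 - 33 (X^T X) + 64 I_p). -/
open Matrix

lemma key {p : ℕ} (M : Matrix (Fin p) (Fin p) ℝ) :
    ((15:ℝ)•(1:Matrix (Fin p) (Fin p) ℝ) - (10:ℝ)•M + (3:ℝ)•M^2) * M *
      ((15:ℝ)•(1:Matrix (Fin p) (Fin p) ℝ) - (10:ℝ)•M + (3:ℝ)•M^2) =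
    (M - 1)^3 * ((9:ℝ)•M^2 - (33:ℝ)•M + (64:ℝ)•(1:Matrix (Fin p) (Fin p) ℝ))
      + (64:ℝ)•(1:Matrix (Fin p) (Fin p) ℝ) := by
  noncomm_ring
  module

/-- The constraint dissolving mapping `A(X) = (1/8) X (15 Iₚ - 10 XᵀX + 3 (XᵀX)²)`. -/
noncomputable def cdMap {n p : ℕ} (X : Matrix (Fin n) (Fin p) ℝ) : Matrix (Fin n) (Fin p) ℝ :=
  (1 / 8 : ℝ) • (X * ((15 : ℝ) • (1 : Matrix (Fin p) (Fin p) ℝ)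
    - (10 : ℝ) • (Xᵀ * X) + (3 : ℝ) • (Xᵀ * X) ^ 2))

theorem stmt_1 {n p : ℕ} (X : Matrix (Fin n) (Fin p) ℝ) :
    (cdMap X)ᵀ * cdMap X - 1 =
      (1 / 64 : ℝ) • ((Xᵀ * X - 1) ^ 3 *
        ((9 : ℝ) • (Xᵀ * X) ^ 2 - (33 : ℝ) • (Xᵀ * X)
          + (64 : ℝ) • (1 : Matrix (Fin p) (Fin p) ℝ))) := by
  set M := Xᵀ * X with hM
  set P : Matrix (Fin p) (Fin p) ℝ := (15:ℝ)•1 - (10:ℝ)•M + (3:ℝ)•M^2 with hP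
  have hMt : Mᵀ = M := by rw [hM]; simp [transpose_mul]
  have hPt : Pᵀ = P := by
    rw [hP]
    simp [transpose_pow, hMt]
  have h1 : (cdMap X)ᵀ * cdMap X = (1/64:ℝ) • (P * M * P) := by
    have h0 : cdMap X = (1/8:ℝ) • (X * P) := rfl
    rw [h0, transpose_smul, transpose_mul, hPt]
    rw [Matrix.smul_mul, Matrix.mul_smul, smul_smul]
    norm_num [hM]
    rw [Matrix.mul_assoc P Xᵀ, Matrix.mul_assoc P (Xᵀ * X) P, Matrix.mul_assoc Xᵀ X P]
  rw [h1, hP, key, smul_add, smul_smul]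
  norm_num
end

section
/- For any X ∈ ℝ^{n×p} with ‖X^T X - I_p‖_F ≤ 1, the mapping A(X) := (1/8) X (15 I_p - 10 X^T X + 3 (X^T X)^2) satisfies ‖A(X)^T A(X) - I_p‖_F ≤ ‖X^T X - I_p‖_F^3. -/
open Matrix

/-- Frobenius norm of a real matrix. -/
noncomputable def frob {m n : ℕ} (X : Matrix (Fin m) (Fin n) ℝ) : ℝ :=
  Real.sqrt (∑ i, ∑ j, (X i j) ^ 2)

section aux

variable {p : ℕ}

lemma frob_sq_eq_trace (A : Matrix (Fin p) (Fin p) ℝ) :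
    ∑ i, ∑ j, (A i j) ^ 2 = (Aᵀ * A).trace := by
  simp [Matrix.trace, Matrix.mul_apply, Matrix.diag, pow_two]
  rw [Finset.sum_comm]

lemma conj_mul' (U A B : Matrix (Fin p) (Fin p) ℝ) (hU : Uᵀ * U = 1) :
    (U * A * Uᵀ) * (U * B * Uᵀ) = U * (A * B) * Uᵀ := by
  calc (U * A * Uᵀ) * (U * B * Uᵀ) = U * A * (Uᵀ * U) * B * Uᵀ := by
        simp [Matrix.mul_assoc]
  _ = U * (A * B) * Uᵀ := by rw [hU]; simp [Matrix.mul_assoc]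

lemma frob_conj (U A : Matrix (Fin p) (Fin p) ℝ) (hU : Uᵀ * U = 1) :
    frob (U * A * Uᵀ) = frob A := by
  unfold frob
  rw [frob_sq_eq_trace, frob_sq_eq_trace]
  congr 1
  have : (U * A * Uᵀ)ᵀ * (U * A * Uᵀ) = U * (Aᵀ * A) * Uᵀ := by
    simp only [Matrix.transpose_mul, Matrix.transpose_transpose]
    calc U * (Aᵀ * Uᵀ) * (U * A * Uᵀ) = U * Aᵀ * (Uᵀ * U) * A * Uᵀ := by
          simp [Matrix.mul_assoc]
    _ = U * (Aᵀ * A) * Uᵀ := by rw [hU]; simp [Matrix.mul_assoc]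
  rw [this, Matrix.trace_mul_cycle, ← Matrix.mul_assoc, hU, Matrix.one_mul]

lemma frob_diagonal (d : Fin p → ℝ) :
    frob (Matrix.diagonal d) = Real.sqrt (∑ i, (d i) ^ 2) := by
  unfold frob
  congr 1
  apply Finset.sum_congr rfl
  intro i _
  rw [Finset.sum_eq_single i]
  · simp
  · intro j _ hj
    simp [Matrix.diagonal_apply_ne' _ hj]
  · simp

lemma sum_cube_le {ι : Type*} [DecidableEq ι] (s : Finset ι) (f : ι → ℝ) (hf : ∀ i ∈ s, 0 ≤ f i) :
    ∑ i ∈ s, (f i) ^ 3 ≤ (∑ i ∈ s, f i) ^ 3 := by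
  induction s using Finset.induction with
  | empty => simp
  | @insert a s' hx ih =>
    rw [Finset.sum_insert hx, Finset.sum_insert hx]
    have h1 : 0 ≤ f a := hf a (Finset.mem_insert_self a s')
    have h2 : ∀ i ∈ s', 0 ≤ f i := fun i hi => hf i (Finset.mem_insert_of_mem hi)
    have h3 : 0 ≤ ∑ i ∈ s', f i := Finset.sum_nonneg h2
    nlinarith [ih h2, mul_nonneg (mul_nonneg h1 h1) h3, mul_nonneg h1 (mul_nonneg h3 h3)]

lemma scalar_key (t : ℝ) (ht : (t - 1)^2 ≤ 1) :
    ((1/64 : ℝ) * ((15 - 10*t + 3*t^2) * (t * (15 - 10*t + 3*t^2))) - 1)^2 ≤ ((t-1)^2)^3 := by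
  have h0 : 0 ≤ t := by nlinarith
  have h2 : t ≤ 2 := by nlinarith
  have hB0 : 0 ≤ 9*t^2 - 33*t + 64 := by nlinarith [sq_nonneg (6*t - 11)]
  have hB1 : 9*t^2 - 33*t + 64 ≤ 64 := by nlinarith
  have key : ((1/64 : ℝ) * ((15 - 10*t + 3*t^2) * (t * (15 - 10*t + 3*t^2))) - 1)^2
      = ((t-1)^2)^3 * ((9*t^2 - 33*t + 64)^2 / 4096) := by ring
  rw [key]
  have hfac : ((9*t^2 - 33*t + 64)^2 / 4096 : ℝ) ≤ 1 := by nlinarith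
  have hpos : (0:ℝ) ≤ ((t-1)^2)^3 := by positivity
  nlinarith [mul_le_mul_of_nonneg_left hfac hpos]

end aux

theorem stmt_2 {n p : ℕ} (X : Matrix (Fin n) (Fin p) ℝ)
    (h : frob (Xᵀ * X - 1) ≤ 1) :
    frob ((cdMap X)ᵀ * cdMap X - 1) ≤ (frob (Xᵀ * X - 1)) ^ 3 := by
  set M : Matrix (Fin p) (Fin p) ℝ := Xᵀ * X with hMdef
  have hM : M.IsHermitian := Matrix.isHermitian_conjTranspose_mul_self X
  have hMsymm : Mᵀ = M := hM
  set U : Matrix (Fin p) (Fin p) ℝ :=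
    (Matrix.IsHermitian.eigenvectorUnitary hM : Matrix (Fin p) (Fin p) ℝ) with hUdef
  set ev : Fin p → ℝ := hM.eigenvalues with hevdef
  have hU : Uᵀ * U = 1 := by
    have := Matrix.mem_unitaryGroup_iff'.mp (Matrix.IsHermitian.eigenvectorUnitary hM).2
    simpa [Matrix.star_eq_conjTranspose, Matrix.conjTranspose_eq_transpose_of_trivial] using this
  have hUU : U * Uᵀ = 1 := by
    have := Matrix.mem_unitaryGroup_iff.mp (Matrix.IsHermitian.eigenvectorUnitary hM).2
    simpa [Matrix.star_eq_conjTranspose, Matrix.conjTranspose_eq_transpose_of_trivial] using this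
  set D : Matrix (Fin p) (Fin p) ℝ := Matrix.diagonal ev with hDdef
  have hspec : M = U * D * Uᵀ := by
    have := hM.spectral_theorem
    simpa [RCLike.ofReal_real_eq_id, Matrix.star_eq_conjTranspose,
      Matrix.conjTranspose_eq_transpose_of_trivial] using this
  -- step 1: reduce to a polynomial in M
  set P : Matrix (Fin p) (Fin p) ℝ :=
    (15 : ℝ) • (1 : Matrix (Fin p) (Fin p) ℝ) - (10 : ℝ) • M + (3 : ℝ) • M ^ 2 with hPdef
  have hPsymm : Pᵀ = P := by
    simp [hPdef, Matrix.transpose_sub, Matrix.transpose_add, Matrix.transpose_smul,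
      Matrix.transpose_one, Matrix.transpose_pow, hMsymm]
  have hstep1 : (cdMap X)ᵀ * cdMap X = (1/64 : ℝ) • (P * (M * P)) := by
    unfold cdMap
    rw [← hMdef, ← hPdef]
    rw [Matrix.transpose_smul, Matrix.transpose_mul, hPsymm]
    rw [Matrix.smul_mul, Matrix.mul_smul, smul_smul]
    norm_num
    rw [Matrix.mul_assoc, ← Matrix.mul_assoc Xᵀ X P, ← hMdef]
  -- step 2: conjugation
  set Pd : Matrix (Fin p) (Fin p) ℝ :=
    (15 : ℝ) • (1 : Matrix (Fin p) (Fin p) ℝ) - (10 : ℝ) • D + (3 : ℝ) • D ^ 2 with hPddef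
  have hone : (1 : Matrix (Fin p) (Fin p) ℝ) = U * 1 * Uᵀ := by rw [Matrix.mul_one, hUU]
  have hM2 : M ^ 2 = U * D ^ 2 * Uᵀ := by
    rw [sq, sq, hspec, conj_mul' U D D hU]
  have hP : P = U * Pd * Uᵀ := by
    rw [hPdef, hPddef, hM2, hspec]
    nth_rewrite 1 [hone]
    simp only [Matrix.mul_sub, Matrix.sub_mul, Matrix.mul_add, Matrix.add_mul,
      Matrix.mul_smul, Matrix.smul_mul]
  have hkey : (cdMap X)ᵀ * cdMap X - 1
      = U * ((1/64 : ℝ) • (Pd * (D * Pd)) - 1) * Uᵀ := by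
    rw [hstep1, hP, hspec, conj_mul' U D Pd hU, conj_mul' U Pd (D * Pd) hU]
    conv_rhs => rw [Matrix.mul_sub, Matrix.sub_mul, Matrix.mul_smul, Matrix.smul_mul,
      Matrix.mul_one, hUU]
  have hPdDiag : Pd = Matrix.diagonal (fun i => 15 - 10 * ev i + 3 * (ev i)^2) := by
    rw [hPddef, hDdef, Matrix.diagonal_pow]
    rw [← Matrix.diagonal_one, ← Matrix.diagonal_smul, ← Matrix.diagonal_smul,
      ← Matrix.diagonal_smul, Matrix.diagonal_sub, Matrix.diagonal_add]
    congr 1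
    funext i
    simp [Pi.pow_apply]
  have hdiag : (1/64 : ℝ) • (Pd * (D * Pd)) - 1
      = Matrix.diagonal (fun i => (1/64 : ℝ)
          * ((15 - 10 * ev i + 3 * (ev i)^2) * (ev i * (15 - 10 * ev i + 3 * (ev i)^2))) - 1) := by
    rw [hPdDiag, hDdef, Matrix.diagonal_mul_diagonal, Matrix.diagonal_mul_diagonal,
      ← Matrix.diagonal_smul, ← Matrix.diagonal_one, Matrix.diagonal_sub]
    congr 1
  have hEdiag : M - 1 = U * Matrix.diagonal (fun i => ev i - 1) * Uᵀ := by
    have hd : D - 1 = Matrix.diagonal (fun i => ev i - 1) := by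
      rw [hDdef, ← Matrix.diagonal_one, Matrix.diagonal_sub]
    rw [hspec, ← hd, Matrix.mul_sub, Matrix.sub_mul, Matrix.mul_one, hUU]
  -- final scalar estimates
  set S : ℝ := ∑ i, (ev i - 1)^2 with hSdef
  have hSnonneg : 0 ≤ S := Finset.sum_nonneg fun i _ => sq_nonneg _
  have hfrobE : frob (M - 1) = Real.sqrt S := by
    rw [hEdiag, frob_conj U _ hU, frob_diagonal]
  have hS1 : S ≤ 1 := by
    rw [hfrobE] at h
    nlinarith [Real.sq_sqrt hSnonneg, Real.sqrt_nonneg S]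
  have hev : ∀ i, (ev i - 1)^2 ≤ 1 := fun i =>
    le_trans (Finset.single_le_sum (f := fun i => (ev i - 1)^2)
      (fun j _ => sq_nonneg _) (Finset.mem_univ i)) hS1
  have hsum : ∑ i, ((1/64 : ℝ) * ((15 - 10 * ev i + 3 * (ev i)^2)
      * (ev i * (15 - 10 * ev i + 3 * (ev i)^2))) - 1)^2 ≤ S ^ 3 := by
    calc ∑ i, ((1/64 : ℝ) * ((15 - 10 * ev i + 3 * (ev i)^2)
        * (ev i * (15 - 10 * ev i + 3 * (ev i)^2))) - 1)^2
        ≤ ∑ i, ((ev i - 1)^2)^3 :=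
          Finset.sum_le_sum fun i _ => scalar_key (ev i) (hev i)
    _ ≤ S ^ 3 := sum_cube_le _ _ fun i _ => sq_nonneg _
  have hsq : ((Real.sqrt S)^3)^2 = S^3 := by
    conv_rhs => rw [← Real.sq_sqrt hSnonneg]
    ring
  have h3 : Real.sqrt (S^3) = Real.sqrt S ^ 3 := by
    rw [← hsq, Real.sqrt_sq (by positivity)]
  rw [hkey, hdiag, frob_conj U _ hU, frob_diagonal, hfrobE, ← h3]
  exact Real.sqrt_le_sqrt hsum
end

section
/- The mapping A(X) := (1/8) X (15 I_p - 10 X^T X + 3 (X^T X)^2) is a bijection from ℝ^{n×p} to ℝ^{n×p} with continuous inverse, i.e., a homeomorphism. -/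
open Matrix

noncomputable def qf (s : ℝ) : ℝ := 15/8 + ((-10/8) * s + (3/8) * s^2)
noncomputable def phif (s : ℝ) : ℝ := qf s * (s * qf s)

lemma qf_pos (s : ℝ) : 0 < qf s := by unfold qf; nlinarith [sq_nonneg (s - 5/3)]

lemma phif_eq : phif = fun s : ℝ => (9*s^5 - 60*s^4 + 190*s^3 - 300*s^2 + 225*s)/64 := by
  funext s; unfold phif qf; ring

lemma phif_hasDeriv (s : ℝ) :
    HasDerivAt phif ((15 * (3*s^2 - 10*s + 15) * (s-1)^2)/64) s := by
  rw [phif_eq]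
  have h := (((((hasDerivAt_pow 5 s).const_mul (9:ℝ)).sub
    ((hasDerivAt_pow 4 s).const_mul (60:ℝ))).add
    ((hasDerivAt_pow 3 s).const_mul (190:ℝ))).sub
    ((hasDerivAt_pow 2 s).const_mul (300:ℝ))).add
    ((hasDerivAt_id s).const_mul (225:ℝ))
  have h2 := h.div_const (64:ℝ)
  refine h2.congr_deriv ?_
  push_cast; ring

lemma phif_continuous : Continuous phif := by
  rw [phif_eq]; fun_prop

lemma phif_strictMono : StrictMono phif := by
  have key : ∀ D : Set ℝ, Convex ℝ D → (∀ x ∈ interior D, x ≠ 1) → StrictMonoOn phif D := by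
    intro D hD h1
    apply strictMonoOn_of_deriv_pos hD phif_continuous.continuousOn
    intro x hx
    rw [(phif_hasDeriv x).deriv]
    have := h1 x hx
    have hne : x - 1 ≠ 0 := sub_ne_zero.2 this
    have h2 : (0:ℝ) < (x-1)^2 := by positivity
    nlinarith [sq_nonneg (x - 5/3)]
  have hIic := key (Set.Iic 1) (convex_Iic 1) (by intro x hx; rw [interior_Iic] at hx; exact ne_of_lt hx)
  have hIci := key (Set.Ici 1) (convex_Ici 1) (by intro x hx; rw [interior_Ici] at hx; exact ne_of_gt hx)
  intro a b hab
  rcases le_or_gt b 1 with h | h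
  · exact hIic (Set.mem_Iic.2 (le_of_lt (lt_of_lt_of_le hab h))) (Set.mem_Iic.2 h) hab
  rcases le_or_gt 1 a with h' | h'
  · exact hIci (Set.mem_Ici.2 h') (Set.mem_Ici.2 (le_of_lt (lt_of_le_of_lt h' hab))) hab
  · exact lt_trans (hIic (Set.mem_Iic.2 h'.le) Set.self_mem_Iic h') (hIci Set.self_mem_Ici (Set.mem_Ici.2 h.le) h)

lemma phif_ge (s : ℝ) (hs : 0 ≤ s) : (25/36) * s ≤ phif s := by
  have h1 : 0 ≤ s * (3*s-5)^2 * (qf s + 5/6) :=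
    mul_nonneg (mul_nonneg hs (sq_nonneg _)) (by linarith [qf_pos s])
  unfold phif qf at *; nlinarith

lemma phif_le (s : ℝ) (hs : s ≤ 0) : phif s ≤ (25/36) * s := by
  have h1 : s * (3*s-5)^2 * (qf s + 5/6) ≤ 0 :=
    mul_nonpos_of_nonpos_of_nonneg
      (mul_nonpos_of_nonpos_of_nonneg hs (sq_nonneg _)) (by linarith [qf_pos s])
  unfold phif qf at *; nlinarith

lemma phif_tendsto_atTop : Filter.Tendsto phif Filter.atTop Filter.atTop := by
  apply Filter.tendsto_atTop_mono' _ _ (Filter.tendsto_id.const_mul_atTop (by norm_num : (0:ℝ) < 25/36))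
  filter_upwards [Filter.eventually_ge_atTop (0:ℝ)] with s hs
  exact phif_ge s hs

lemma phif_tendsto_atBot : Filter.Tendsto phif Filter.atBot Filter.atBot := by
  apply Filter.tendsto_atBot_mono' _ _ (Filter.tendsto_id.const_mul_atBot (by norm_num : (0:ℝ) < 25/36))
  filter_upwards [Filter.eventually_le_atBot (0:ℝ)] with s hs
  exact phif_le s hs

lemma phif_surjective : Function.Surjective phif :=
  phif_continuous.surjective phif_tendsto_atTop phif_tendsto_atBot

noncomputable def phiIso : ℝ ≃o ℝ :=
  StrictMono.orderIsoOfSurjective phif phif_strictMono phif_surjective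

noncomputable def psinv : ℝ → ℝ := phiIso.symm

lemma psinv_phif (s : ℝ) : psinv (phif s) = s := by
  have : phiIso s = phif s := congrFun (StrictMono.coe_orderIsoOfSurjective phif phif_strictMono phif_surjective) s
  rw [psinv, ← this]; exact phiIso.symm_apply_apply s

lemma phif_psinv (s : ℝ) : phif (psinv s) = s := by
  have hco : ∀ t, phiIso t = phif t := fun t =>
    congrFun (StrictMono.coe_orderIsoOfSurjective phif phif_strictMono phif_surjective) t
  rw [psinv, ← hco]; exact phiIso.apply_symm_apply s

lemma psinv_continuous : Continuous psinv := by
  exact phiIso.symm.toHomeomorph.continuous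
lemma cfc_qf {p : ℕ} (A : Matrix (Fin p) (Fin p) ℝ) (hA : IsSelfAdjoint A) :
    cfc qf A = (15/8 : ℝ) • 1 + ((-10/8 : ℝ) • A + (3/8 : ℝ) • A^2) := by
  have h1 : cfc qf A = cfc (fun s : ℝ => 15/8 + ((-10/8) * s + (3/8) * s^2)) A := rfl
  rw [h1, cfc_const_add _ _ _ (by fun_prop), cfc_add _ _ _ (by fun_prop) (by fun_prop),
    cfc_const_mul _ _ _ (by fun_prop), cfc_const_mul _ _ _ (by fun_prop),
    cfc_id' ℝ A, cfc_pow_id A 2]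
  simp [Algebra.algebraMap_eq_smul_one]

lemma selfAdj_tmul {n p : ℕ} (X : Matrix (Fin n) (Fin p) ℝ) : IsSelfAdjoint (Xᵀ * X) := by
  have h := Matrix.isHermitian_conjTranspose_mul_self X
  rwa [Matrix.conjTranspose_eq_transpose_of_trivial] at h

lemma cdMap_eq {n p : ℕ} (X : Matrix (Fin n) (Fin p) ℝ) :
    cdMap X = X * cfc qf (Xᵀ * X) := by
  rw [cfc_qf _ (selfAdj_tmul X), cdMap]
  simp only [Matrix.mul_add, Matrix.mul_sub, Matrix.mul_neg, Matrix.mul_smul, Matrix.mul_one,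
    smul_add, smul_sub, smul_neg, smul_smul, neg_smul, one_smul]
  norm_num
  module

lemma qf_continuous : Continuous qf := by unfold qf; fun_prop

noncomputable def rhof (s : ℝ) : ℝ := (qf (psinv s))⁻¹

lemma rhof_continuous : Continuous rhof :=
  (qf_continuous.comp psinv_continuous).inv₀ (fun s => ne_of_gt (qf_pos _))

noncomputable def cdInv {n p : ℕ} (Y : Matrix (Fin n) (Fin p) ℝ) : Matrix (Fin n) (Fin p) ℝ :=
  Y * cfc rhof (Yᵀ * Y)

lemma transpose_mul_cfc {n p : ℕ} (X : Matrix (Fin n) (Fin p) ℝ) (f : ℝ → ℝ) :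
    (X * cfc f (Xᵀ * X))ᵀ * (X * cfc f (Xᵀ * X)) =
      cfc f (Xᵀ * X) * (Xᵀ * X) * cfc f (Xᵀ * X) := by
  have hQ : (cfc f (Xᵀ * X))ᵀ = cfc f (Xᵀ * X) := by
    rw [← Matrix.conjTranspose_eq_transpose_of_trivial]
    exact cfc_predicate f (Xᵀ * X)
  rw [Matrix.transpose_mul, hQ]
  simp only [Matrix.mul_assoc]

lemma sandwich_eq_cfc {p : ℕ} (A : Matrix (Fin p) (Fin p) ℝ) (hA : IsSelfAdjoint A)
    (f : ℝ → ℝ) (hf : Continuous f) :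
    cfc f A * A * cfc f A = cfc (fun s => f s * (s * f s)) A := by
  rw [cfc_mul _ _ A (by fun_prop) (by fun_prop),
    cfc_mul _ _ A (by fun_prop) (by fun_prop), cfc_id' ℝ A, Matrix.mul_assoc]

lemma cdInv_cdMap {n p : ℕ} (X : Matrix (Fin n) (Fin p) ℝ) : cdInv (cdMap X) = X := by
  have hS := selfAdj_tmul X
  rw [cdMap_eq, cdInv, transpose_mul_cfc, sandwich_eq_cfc _ hS qf qf_continuous]
  have h1 : cfc (fun s => qf s * (s * qf s)) (Xᵀ * X) = cfc phif (Xᵀ * X) := rfl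
  rw [h1, ← cfc_comp rhof phif (Xᵀ * X) hS (rhof_continuous.continuousOn) (phif_continuous.continuousOn)]
  have h2 : cfc (rhof ∘ phif) (Xᵀ * X) = cfc (fun s => (qf s)⁻¹) (Xᵀ * X) := by
    congr 1; funext s; simp [rhof, Function.comp, psinv_phif]
  rw [h2, Matrix.mul_assoc, ← cfc_mul qf (fun s => (qf s)⁻¹) (Xᵀ * X) (qf_continuous.continuousOn)
    ((qf_continuous.inv₀ (fun s => ne_of_gt (qf_pos _))).continuousOn)]
  have h3 : cfc (fun s => qf s * (qf s)⁻¹) (Xᵀ * X) = (1 : Matrix (Fin p) (Fin p) ℝ) := by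
    have : (fun s => qf s * (qf s)⁻¹) = fun _ : ℝ => (1:ℝ) := by
      funext s; exact mul_inv_cancel₀ (ne_of_gt (qf_pos s))
    rw [this, cfc_const_one ℝ (Xᵀ * X)]
  rw [h3, Matrix.mul_one]

lemma cdMap_cdInv {n p : ℕ} (Y : Matrix (Fin n) (Fin p) ℝ) : cdMap (cdInv Y) = Y := by
  have hT := selfAdj_tmul Y
  rw [cdInv, cdMap_eq, transpose_mul_cfc, sandwich_eq_cfc _ hT rhof rhof_continuous]
  have h1 : cfc (fun s => rhof s * (s * rhof s)) (Yᵀ * Y) = cfc psinv (Yᵀ * Y) := by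
    congr 1; funext s
    have ha : qf (psinv s) ≠ 0 := ne_of_gt (qf_pos _)
    have hs : phif (psinv s) = s := phif_psinv s
    unfold phif at hs
    simp only [rhof]
    field_simp
    nlinarith [hs]
  rw [h1, ← cfc_comp qf psinv (Yᵀ * Y) hT (qf_continuous.continuousOn) (psinv_continuous.continuousOn)]
  rw [Matrix.mul_assoc, ← cfc_mul _ _ (Yᵀ * Y) (rhof_continuous.continuousOn)
    ((qf_continuous.comp psinv_continuous).continuousOn)]
  have h3 : cfc (fun s => rhof s * (qf ∘ psinv) s) (Yᵀ * Y) = (1 : Matrix (Fin p) (Fin p) ℝ) := by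
    have : (fun s => rhof s * (qf ∘ psinv) s) = fun _ : ℝ => (1:ℝ) := by
      funext s; exact inv_mul_cancel₀ (ne_of_gt (qf_pos _))
    rw [this, cfc_const_one ℝ (Yᵀ * Y)]
  rw [h3, Matrix.mul_one]

section Analysis

open Filter

attribute [local instance] Matrix.normedAddCommGroup Matrix.normedSpace

variable {n p : ℕ}

lemma cdMap_continuous : Continuous (cdMap (n := n) (p := p)) := by
  unfold cdMap
  fun_prop

lemma trace_cfc' (A : Matrix (Fin p) (Fin p) ℝ) (hA : A.IsHermitian) (f : ℝ → ℝ) :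
    (cfc f A).trace = ∑ i, f (hA.eigenvalues i) := by
  rw [hA.cfc_eq, Matrix.IsHermitian.cfc, Unitary.conjStarAlgAut_apply, Matrix.trace_mul_cycle]
  rw [Unitary.star_mul_self_of_mem (SetLike.coe_mem _), Matrix.one_mul, Matrix.trace_diagonal]
  simp

lemma isHermitian_tmul (X : Matrix (Fin n) (Fin p) ℝ) : (Xᵀ * X).IsHermitian := by
  have h := Matrix.isHermitian_conjTranspose_mul_self X
  rwa [Matrix.conjTranspose_eq_transpose_of_trivial] at h

lemma trace_tmul (X : Matrix (Fin n) (Fin p) ℝ) :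
    (Xᵀ * X).trace = ∑ j, ∑ i, (X i j)^2 := by
  simp [Matrix.trace, Matrix.diag, Matrix.mul_apply, sq]

lemma phif_nonneg {s : ℝ} (hs : 0 ≤ s) : 0 ≤ phif s := by
  have h := phif_strictMono.monotone hs
  have h0 : phif 0 = 0 := by unfold phif qf; ring
  linarith [h0 ▸ h]

lemma norm_sq_le_trace (X : Matrix (Fin n) (Fin p) ℝ) : ‖X‖^2 ≤ (Xᵀ * X).trace := by
  have htr := trace_tmul X
  have hnn : 0 ≤ (Xᵀ * X).trace := by rw [htr]; positivity
  have hb : ∀ i j, ‖X i j‖ ≤ Real.sqrt ((Xᵀ * X).trace) := by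
    intro i j
    rw [Real.norm_eq_abs]
    apply Real.abs_le_sqrt
    rw [htr]
    calc X i j ^ 2 ≤ ∑ i', (X i' j)^2 :=
          Finset.single_le_sum (f := fun i' => X i' j ^ 2) (fun _ _ => sq_nonneg _)
            (Finset.mem_univ i)
      _ ≤ ∑ j', ∑ i', (X i' j')^2 :=
          Finset.single_le_sum (f := fun j' => ∑ i', (X i' j')^2)
            (fun _ _ => by positivity) (Finset.mem_univ j)
  have hX : ‖X‖ ≤ Real.sqrt ((Xᵀ * X).trace) := by
    rw [Matrix.norm_le_iff (Real.sqrt_nonneg _)]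
    intro i j
    exact hb i j
  calc ‖X‖^2 ≤ Real.sqrt ((Xᵀ * X).trace)^2 := by
        apply pow_le_pow_left₀ (norm_nonneg _) hX
    _ = (Xᵀ * X).trace := Real.sq_sqrt hnn

lemma trace_le_norm (Z : Matrix (Fin n) (Fin p) ℝ) :
    (Zᵀ * Z).trace ≤ (n * p : ℝ) * ‖Z‖^2 := by
  rw [trace_tmul]
  have hb : ∀ (i : Fin n) (j : Fin p), (Z i j)^2 ≤ ‖Z‖^2 := by
    intro i j
    have h1 : ‖Z i j‖ ≤ ‖Z‖ := (norm_le_pi_norm (Z i) j).trans (norm_le_pi_norm Z i)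
    calc (Z i j)^2 = ‖Z i j‖^2 := by rw [Real.norm_eq_abs, sq_abs]
      _ ≤ ‖Z‖^2 := by apply pow_le_pow_left₀ (norm_nonneg _) h1
  calc ∑ j, ∑ i, (Z i j)^2 ≤ ∑ _j : Fin p, ∑ _i : Fin n, ‖Z‖^2 := by
        apply Finset.sum_le_sum; intro j _; apply Finset.sum_le_sum; intro i _; exact hb i j
    _ = (n * p : ℝ) * ‖Z‖^2 := by
        simp [Finset.sum_const, Finset.card_univ]; ring

lemma key_bound (hp : 0 < p) (X : Matrix (Fin n) (Fin p) ℝ) :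
    phif (‖X‖^2 / p) ≤ ((cdMap X)ᵀ * (cdMap X)).trace := by
  have hH := isHermitian_tmul X
  rw [cdMap_eq, transpose_mul_cfc, sandwich_eq_cfc _ (selfAdj_tmul X) qf qf_continuous]
  rw [show (fun s => qf s * (s * qf s)) = phif from rfl, trace_cfc' _ hH phif]
  have hnn : ∀ i, 0 ≤ hH.eigenvalues i := by
    intro i
    have hPSD := Matrix.posSemidef_conjTranspose_mul_self X
    rw [Matrix.conjTranspose_eq_transpose_of_trivial] at hPSD
    exact hPSD.eigenvalues_nonneg i
  have htr : (Xᵀ * X).trace = ∑ i, hH.eigenvalues i := by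
    have h := trace_cfc' (Xᵀ * X) hH id
    rwa [cfc_id ℝ (Xᵀ * X) (selfAdj_tmul X)] at h
  obtain ⟨k, -, hk⟩ := Finset.exists_max_image Finset.univ hH.eigenvalues
    ⟨⟨0, hp⟩, Finset.mem_univ _⟩
  have h1 := norm_sq_le_trace X
  have h2 : (Xᵀ * X).trace ≤ p * hH.eigenvalues k := by
    rw [htr]
    calc ∑ i, hH.eigenvalues i ≤ ∑ _i : Fin p, hH.eigenvalues k :=
          Finset.sum_le_sum (fun i _ => hk i (Finset.mem_univ i))
      _ = p * hH.eigenvalues k := by simp [Finset.sum_const, Finset.card_univ]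
  have hp' : (0:ℝ) < p := by exact_mod_cast hp
  have h3 : ‖X‖^2 / p ≤ hH.eigenvalues k := by
    rw [div_le_iff₀ hp']
    nlinarith
  calc phif (‖X‖^2 / p) ≤ phif (hH.eigenvalues k) := phif_strictMono.monotone h3
    _ ≤ ∑ i, phif (hH.eigenvalues i) :=
        Finset.single_le_sum (fun i _ => phif_nonneg (hnn i)) (Finset.mem_univ k)

lemma sqrt_tendsto_atTop : Filter.Tendsto Real.sqrt atTop atTop := by
  apply Filter.tendsto_atTop_atTop_of_monotone (fun a b h => Real.sqrt_le_sqrt h)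
  intro b
  exact ⟨(max b 0)^2, by rw [Real.sqrt_sq (le_max_right b 0)]; exact le_max_left _ _⟩

lemma cdMap_tendsto_cocompact (hn : 0 < n) (hp : 0 < p) :
    Tendsto (cdMap (n := n) (p := p)) (cocompact _) (cocompact _) := by
  have hp' : (0:ℝ) < p := by exact_mod_cast hp
  have hnp' : (0:ℝ) < (n * p : ℝ) := by positivity
  have hbound : ∀ X : Matrix (Fin n) (Fin p) ℝ,
      Real.sqrt (phif (‖X‖^2 / p) / (n * p : ℝ)) ≤ ‖cdMap X‖ := by
    intro X
    have h1 := key_bound hp X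
    have h2 := trace_le_norm (cdMap X)
    calc Real.sqrt (phif (‖X‖^2 / p) / (n * p : ℝ)) ≤ Real.sqrt (‖cdMap X‖^2) := by
          apply Real.sqrt_le_sqrt
          rw [div_le_iff₀ hnp']
          nlinarith
      _ = ‖cdMap X‖ := Real.sqrt_sq (norm_nonneg _)
  have hs : Tendsto (fun t : ℝ => Real.sqrt (phif (t^2 / p) / (n * p : ℝ))) atTop atTop := by
    have h1 : Tendsto (fun t : ℝ => t^2 / p) atTop atTop :=
      (tendsto_pow_atTop two_ne_zero).atTop_div_const hp'
    have h2 : Tendsto (fun t : ℝ => phif (t^2 / p)) atTop atTop := phif_tendsto_atTop.comp h1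
    have h3 : Tendsto (fun t : ℝ => phif (t^2 / p) / (n * p : ℝ)) atTop atTop :=
      h2.atTop_div_const hnp'
    exact sqrt_tendsto_atTop.comp h3
  have h : Tendsto (fun X : Matrix (Fin n) (Fin p) ℝ => ‖cdMap X‖) (cocompact _) atTop := by
    apply Filter.tendsto_atTop_mono hbound
    exact hs.comp tendsto_norm_cocompact_atTop
  have he : Filter.comap (norm : Matrix (Fin n) (Fin p) ℝ → ℝ) atTop = cocompact _ := by
    rw [comap_norm_atTop, Metric.cobounded_eq_cocompact]
    rfl
  exact (Filter.tendsto_comap_iff.mpr h).mono_right he.le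

lemma cdInv_continuous (hn : 0 < n) (hp : 0 < p) :
    Continuous (cdInv (n := n) (p := p)) := by
  haveI : CompactlyCoherentSpace (Matrix (Fin n) (Fin p) ℝ) :=
    inferInstanceAs (CompactlyCoherentSpace (Fin n → Fin p → ℝ))
  have hproper : IsProperMap (cdMap (n := n) (p := p)) :=
    isProperMap_iff_tendsto_cocompact.2 ⟨cdMap_continuous, cdMap_tendsto_cocompact hn hp⟩
  rw [continuous_iff_isClosed]
  intro s hs
  have himg : cdInv ⁻¹' s = cdMap '' s := by
    ext Z
    simp only [Set.mem_preimage, Set.mem_image]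
    constructor
    · intro h; exact ⟨cdInv Z, h, cdMap_cdInv Z⟩
    · rintro ⟨Y, hY, rfl⟩; rwa [cdInv_cdMap]
  rw [himg]
  exact hproper.isClosedMap s hs

end Analysis

theorem stmt_5 {n p : ℕ} :
    ∃ e : Matrix (Fin n) (Fin p) ℝ ≃ₜ Matrix (Fin n) (Fin p) ℝ,
      ∀ X, e X = cdMap X := by
  rcases Nat.eq_zero_or_pos n with hn | hn
  · haveI : Subsingleton (Matrix (Fin n) (Fin p) ℝ) :=
      ⟨fun A B => by ext i j; exact absurd i.2 (by omega)⟩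
    exact ⟨Homeomorph.refl _, fun X => Subsingleton.elim _ _⟩
  rcases Nat.eq_zero_or_pos p with hp | hp
  · haveI : Subsingleton (Matrix (Fin n) (Fin p) ℝ) :=
      ⟨fun A B => by ext i j; exact absurd j.2 (by omega)⟩
    exact ⟨Homeomorph.refl _, fun X => Subsingleton.elim _ _⟩
  exact ⟨{ toFun := cdMap, invFun := cdInv, left_inv := cdInv_cdMap, right_inv := cdMap_cdInv,
           continuous_toFun := cdMap_continuous,
           continuous_invFun := cdInv_continuous hn hp }, fun X => rfl⟩
end

section
/- For X in the Stiefel manifold S_{n,p} and any D ∈ ℝ^{n×p}, the directional derivative (Jacobian) of A(X) = (1/8) X (15 I_p - 10 X^T X + 3 (X^T X)^2) in direction D equals D - X Φ(D^T X), where Φ(M) = (M + M^T)/2. -/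
open Matrix

/-- The symmetrization operator `Φ(M) = (M + Mᵀ)/2`. -/
noncomputable def symPart {p : ℕ} (M : Matrix (Fin p) (Fin p) ℝ) : Matrix (Fin p) (Fin p) ℝ :=
  (1 / 2 : ℝ) • (M + Mᵀ)

/-- Higher-order coefficients of the expansion of `cdMap (X + t • D)` in `t`. -/
noncomputable def cdRem {n p : ℕ} (X D : Matrix (Fin n) (Fin p) ℝ) (t : ℝ) :
    Matrix (Fin n) (Fin p) ℝ :=
  let S : Matrix (Fin p) (Fin p) ℝ := Dᵀ * X + Xᵀ * D
  let Q : Matrix (Fin p) (Fin p) ℝ := Dᵀ * D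
  ((1/8 : ℝ) • (X * ((3:ℝ) • (S * S) - (4:ℝ) • Q)) - (1/2 : ℝ) • (D * S))
  + t • (((3/8 : ℝ) • (X * (S * Q + Q * S)) + (1/8 : ℝ) • (D * ((3:ℝ) • (S * S) - (4:ℝ) • Q)))
  + t • (((3/8 : ℝ) • (X * (Q * Q)) + (3/8 : ℝ) • (D * (S * Q + Q * S)))
  + t • ((3/8 : ℝ) • (D * (Q * Q)))))

theorem stmt_7 {n p : ℕ} (X : Matrix (Fin n) (Fin p) ℝ) (hX : Xᵀ * X = 1)
    (D : Matrix (Fin n) (Fin p) ℝ) :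
    Filter.Tendsto (fun t : ℝ => t⁻¹ • (cdMap (X + t • D) - cdMap X))
      (nhdsWithin 0 {0}ᶜ) (nhds (D - X * symPart (Dᵀ * X))) := by
  set L : Matrix (Fin n) (Fin p) ℝ := D - X * symPart (Dᵀ * X) with hL
  have hX' : ∀ M : Matrix (Fin p) (Fin p) ℝ, Xᵀ * (X * M) = M := by
    intro M; rw [← Matrix.mul_assoc, hX, Matrix.one_mul]
  have key : ∀ t : ℝ, cdMap (X + t • D) - cdMap X = t • (L + t • cdRem X D t) := by
    intro t
    simp only [cdMap, cdRem, hL, symPart, pow_two, transpose_add, transpose_smul,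
      transpose_mul, transpose_transpose, Matrix.mul_add, Matrix.add_mul, Matrix.mul_sub,
      Matrix.sub_mul, Matrix.smul_mul, Matrix.mul_smul, Matrix.mul_one, Matrix.one_mul,
      Matrix.mul_assoc, hX, hX', smul_add,
      smul_sub, smul_smul]
    module
  have hcont : Filter.Tendsto (fun t : ℝ => L + t • cdRem X D t) (nhds 0) (nhds L) := by
    have hc : Continuous fun t : ℝ => L + t • cdRem X D t := by
      unfold cdRem; fun_prop
    simpa using hc.tendsto 0
  refine (hcont.mono_left nhdsWithin_le_nhds).congr' ?_
  filter_upwards [self_mem_nhdsWithin] with t ht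
  rw [key t, smul_smul, inv_mul_cancel₀ (by simpa using ht), one_smul]
end

section
/- For any X ∈ ℝ^{n×p} and any D ∈ ℝ^{n×p}, the Jacobian of A(X) = (1/8) X (15 I_p - 10 X^T X + 3 (X^T X)^2) in direction D is J_A(X)[D] = (1/8) D (15 I_p - 10 X^T X + 3 (X^T X)^2) - X Φ(X^T D) + (3/2) X Φ(Φ(X^T D)(X^T X - I_p)), where Φ(M) = (M + M^T)/2. -/
open Matrix

theorem stmt_8 {n p : ℕ} (X D : Matrix (Fin n) (Fin p) ℝ) :
    Filter.Tendsto (fun t : ℝ => t⁻¹ • (cdMap (X + t • D) - cdMap X))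
      (nhdsWithin 0 {0}ᶜ)
      (nhds ((1 / 8 : ℝ) • (D * ((15 : ℝ) • (1 : Matrix (Fin p) (Fin p) ℝ)
          - (10 : ℝ) • (Xᵀ * X) + (3 : ℝ) • (Xᵀ * X) ^ 2))
        - X * symPart (Xᵀ * D)
        + (3 / 2 : ℝ) • (X * symPart (symPart (Xᵀ * D) * (Xᵀ * X - 1))))) := by
  set A : Matrix (Fin p) (Fin p) ℝ := Xᵀ * X with hA
  set B : Matrix (Fin p) (Fin p) ℝ := Xᵀ * D + Dᵀ * X with hB
  set C : Matrix (Fin p) (Fin p) ℝ := Dᵀ * D with hC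
  set G1 : Matrix (Fin p) (Fin p) ℝ := (-10:ℝ) • B + (3:ℝ) • (A*B + B*A) with hG1
  set G2 : Matrix (Fin p) (Fin p) ℝ := (-10:ℝ) • C + (3:ℝ) • (A*C + C*A + B*B) with hG2
  set G3 : Matrix (Fin p) (Fin p) ℝ := (3:ℝ) • (B*C + C*B) with hG3
  set G4 : Matrix (Fin p) (Fin p) ℝ := (3:ℝ) • (C*C) with hG4
  set L : Matrix (Fin n) (Fin p) ℝ :=
    ((1 / 8 : ℝ) • (D * ((15 : ℝ) • (1 : Matrix (Fin p) (Fin p) ℝ)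
          - (10 : ℝ) • (Xᵀ * X) + (3 : ℝ) • (Xᵀ * X) ^ 2))
        - X * symPart (Xᵀ * D)
        + (3 / 2 : ℝ) • (X * symPart (symPart (Xᵀ * D) * (Xᵀ * X - 1)))) with hL
  set R : ℝ → Matrix (Fin n) (Fin p) ℝ := fun t =>
    (1 / 8 : ℝ) • (X * (G2 + t • G3 + t^2 • G4) + D * (G1 + t • G2 + t^2 • G3 + t^3 • G4)) with hR
  have key : ∀ t : ℝ, cdMap (X + t • D) - cdMap X = t • L + t^2 • R t := by
    intro t
    simp only [hR, hL, hG1, hG2, hG3, hG4, hA, hB, hC, cdMap, symPart,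
      transpose_add, transpose_smul, transpose_mul, transpose_transpose, transpose_one,
      transpose_sub, pow_two, Matrix.mul_add, Matrix.add_mul, Matrix.mul_sub, Matrix.sub_mul,
      Matrix.smul_mul, Matrix.mul_smul, Matrix.mul_one, Matrix.one_mul, smul_add, smul_sub,
      smul_smul, mul_assoc]
    module
  have hRcont : Continuous R := by
    refine Continuous.const_smul (β := ℝ) (α := Matrix (Fin n) (Fin p) ℝ) ?_ (1 / 8 : ℝ)
    refine Continuous.add (Continuous.matrix_mul continuous_const ?_)
      (Continuous.matrix_mul continuous_const ?_) <;> fun_prop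
  have hcong : (fun t : ℝ => t⁻¹ • (cdMap (X + t • D) - cdMap X))
      =ᶠ[nhdsWithin (0:ℝ) {0}ᶜ] fun t => L + t • R t := by
    filter_upwards [self_mem_nhdsWithin] with t ht
    have ht0 : t ≠ 0 := ht
    rw [key t, smul_add, smul_smul, smul_smul, inv_mul_cancel₀ ht0, one_smul,
      pow_two, ← mul_assoc, inv_mul_cancel₀ ht0, one_mul]
  rw [Filter.tendsto_congr' hcong]
  have : Filter.Tendsto (fun t : ℝ => L + t • R t) (nhds 0) (nhds (L + (0:ℝ) • R 0)) := by
    apply Filter.Tendsto.const_add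
    exact (continuous_id.smul hRcont).tendsto 0
  simpa using this.mono_left nhdsWithin_le_nhds
end

section
/- For any X ∈ ℝ^{n×p}, ‖X - P(X)‖_F ≤ ‖X^T X - I_p‖_F, where P(X) = U V^T denotes the polar factor (projection onto the Stiefel manifold) obtained from the economical SVD X = U Σ V^T. -/
open Matrix

lemma sumsq_eq_trace {m n : ℕ} (X : Matrix (Fin m) (Fin n) ℝ) :
    ∑ i, ∑ j, (X i j) ^ 2 = Matrix.trace (Xᵀ * X) := by
  rw [Matrix.trace, Finset.sum_comm]
  simp [Matrix.mul_apply, Matrix.diag, pow_two]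

lemma sumsq_conj {m n : ℕ} (U : Matrix (Fin m) (Fin n) ℝ)
    (V : Matrix (Fin n) (Fin n) ℝ) (d : Fin n → ℝ)
    (hU : Uᵀ * U = 1) (hV : Vᵀ * V = 1) :
    ∑ i, ∑ j, ((U * Matrix.diagonal d * Vᵀ) i j) ^ 2 = ∑ i, d i ^ 2 := by
  rw [sumsq_eq_trace]
  have h : (U * Matrix.diagonal d * Vᵀ)ᵀ * (U * Matrix.diagonal d * Vᵀ)
      = V * (Matrix.diagonal d * Matrix.diagonal d) * Vᵀ := by
    simp only [Matrix.transpose_mul, Matrix.transpose_transpose,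
      Matrix.diagonal_transpose, Matrix.mul_assoc]
    rw [← Matrix.mul_assoc Uᵀ U, hU, Matrix.one_mul]
  rw [h, Matrix.trace_mul_cycle, ← Matrix.mul_assoc, hV, Matrix.one_mul,
    Matrix.diagonal_mul_diagonal, Matrix.trace_diagonal]
  simp [pow_two]

/-- For any economical SVD `X = U Σ Vᵀ` with orthonormal `U`, orthogonal `V` and
nonnegative diagonal `Σ`, the polar factor `U Vᵀ` satisfies
`‖X - U Vᵀ‖_F ≤ ‖XᵀX - Iₚ‖_F`. -/
theorem stmt_11 {n p : ℕ} (X U : Matrix (Fin n) (Fin p) ℝ)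
    (V : Matrix (Fin p) (Fin p) ℝ) (σ : Fin p → ℝ)
    (hU : Uᵀ * U = 1) (hV : Vᵀ * V = 1) (hV' : V * Vᵀ = 1)
    (hσ : ∀ i, 0 ≤ σ i)
    (hX : X = U * Matrix.diagonal σ * Vᵀ) :
    frob (X - U * Vᵀ) ≤ frob (Xᵀ * X - 1) := by
  have h1 : X - U * Vᵀ = U * Matrix.diagonal (fun i => σ i - 1) * Vᵀ := by
    rw [hX]
    have hd : Matrix.diagonal (fun i => σ i - 1)
        = Matrix.diagonal σ - (1 : Matrix (Fin p) (Fin p) ℝ) := by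
      rw [← Matrix.diagonal_one, Matrix.diagonal_sub]
    rw [hd, Matrix.mul_sub, Matrix.mul_one, Matrix.sub_mul]
  have h2 : Xᵀ * X - 1 = V * Matrix.diagonal (fun i => σ i ^ 2 - 1) * Vᵀ := by
    rw [hX]
    simp only [Matrix.transpose_mul, Matrix.transpose_transpose,
      Matrix.diagonal_transpose, Matrix.mul_assoc]
    rw [← Matrix.mul_assoc Uᵀ U, hU, Matrix.one_mul,
      ← Matrix.mul_assoc (Matrix.diagonal σ), Matrix.diagonal_mul_diagonal]
    have hd : Matrix.diagonal (fun i => σ i ^ 2 - 1)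
        = Matrix.diagonal (fun i => σ i * σ i) - (1 : Matrix (Fin p) (Fin p) ℝ) := by
      rw [← Matrix.diagonal_one, ← Matrix.diagonal_sub]
      simp [pow_two]
    rw [hd, Matrix.sub_mul, Matrix.mul_sub, Matrix.one_mul, ← Matrix.mul_assoc, hV']
  unfold frob
  apply Real.sqrt_le_sqrt
  rw [h1, h2, sumsq_conj U V _ hU hV, sumsq_conj V V _ hV hV]
  apply Finset.sum_le_sum
  intro i _
  have := hσ i
  nlinarith [sq_nonneg (σ i - 1), sq_nonneg (σ i + 1)]
end

section
/- Suppose Y_0 ∈ ℝ^{n×p} satisfies ‖Y_0^T Y_0 - I_p‖_F ≤ 1/6 and the sequence {Y_k} is generated by Y_{k+1} = Y_k - η_k (D_k + β Y_k (Y_k^T Y_k - I_p)), where ‖D_k‖_F ≤ M_2 for all k, β ≥ 60 M_2 > 0, and 0 < η_k ≤ 1/(2β). Then ‖Y_k^T Y_k - I_p‖_F ≤ 1/6 for all k ≥ 0. -/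
open Matrix

section FrobBasic
attribute [local instance] Matrix.frobeniusSeminormedAddCommGroup

lemma frob_eq_norm {m n : ℕ} (X : Matrix (Fin m) (Fin n) ℝ) : frob X = ‖X‖ := by
  rw [frobenius_norm_def, frob, Real.sqrt_eq_rpow]
  congr 1
  refine Finset.sum_congr rfl fun i _ => Finset.sum_congr rfl fun j _ => ?_
  rw [Real.norm_eq_abs, Real.rpow_two, sq_abs]

end FrobBasic

noncomputable def opn {m n : ℕ} (A : Matrix (Fin m) (Fin n) ℝ) : ℝ :=
  @Norm.norm _ (Matrix.instL2OpNormedAddCommGroup).toNorm A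

section OpBasic
open scoped Matrix.Norms.L2Operator

lemma opn_eq_norm {m n : ℕ} (A : Matrix (Fin m) (Fin n) ℝ) : opn A = ‖A‖ := rfl

lemma opn_nonneg {m n : ℕ} (A : Matrix (Fin m) (Fin n) ℝ) : 0 ≤ opn A := by
  rw [opn_eq_norm]; exact norm_nonneg _

lemma opn_transpose {m n : ℕ} (A : Matrix (Fin m) (Fin n) ℝ) : opn Aᵀ = opn A := by
  rw [opn_eq_norm, opn_eq_norm, ← Matrix.conjTranspose_eq_transpose_of_trivial,
    Matrix.l2_opNorm_conjTranspose]

lemma opn_transpose_mul_self {m n : ℕ} (A : Matrix (Fin m) (Fin n) ℝ) :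
    opn (Aᵀ * A) = opn A * opn A := by
  rw [opn_eq_norm, opn_eq_norm, ← Matrix.conjTranspose_eq_transpose_of_trivial,
    Matrix.l2_opNorm_conjTranspose_mul_self]

lemma opn_add_le {m n : ℕ} (A B : Matrix (Fin m) (Fin n) ℝ) :
    opn (A + B) ≤ opn A + opn B := by
  simp only [opn_eq_norm]; exact norm_add_le _ _

lemma opn_one_le {p : ℕ} : opn (1 : Matrix (Fin p) (Fin p) ℝ) ≤ 1 := by
  rw [opn_eq_norm, Matrix.cstar_norm_def, _root_.map_one]
  exact ContinuousLinearMap.norm_id_le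

lemma opn_mulVec {m n : ℕ} (A : Matrix (Fin m) (Fin n) ℝ) (x : Fin n → ℝ) :
    Real.sqrt (∑ i, (A *ᵥ x) i ^ 2) ≤ opn A * Real.sqrt (∑ j, x j ^ 2) := by
  have h := Matrix.l2_opNorm_mulVec A ((WithLp.equiv 2 (Fin n → ℝ)).symm x)
  have e1 : ∀ (k : ℕ) (v : Fin k → ℝ),
      ‖(WithLp.equiv 2 (Fin k → ℝ)).symm v‖ = Real.sqrt (∑ i, v i ^ 2) := by
    intro k v
    rw [EuclideanSpace.norm_eq]
    congr 1
    exact Finset.sum_congr rfl fun i _ => by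
      rw [show ((WithLp.equiv 2 (Fin k → ℝ)).symm v).ofLp i = v i from rfl, Real.norm_eq_abs, sq_abs]
  rw [opn_eq_norm]
  calc Real.sqrt (∑ i, (A *ᵥ x) i ^ 2)
      = ‖(EuclideanSpace.equiv (Fin m) ℝ).symm
          (A *ᵥ (WithLp.equiv 2 (Fin n → ℝ)) ((WithLp.equiv 2 (Fin n → ℝ)).symm x))‖ := by
        rw [Equiv.apply_symm_apply]; exact (e1 m _).symm
    _ ≤ ‖A‖ * ‖(WithLp.equiv 2 (Fin n → ℝ)).symm x‖ := h
    _ = ‖A‖ * Real.sqrt (∑ j, x j ^ 2) := by rw [e1]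

end OpBasic

lemma frob_nonneg {m n : ℕ} (A : Matrix (Fin m) (Fin n) ℝ) : 0 ≤ frob A := Real.sqrt_nonneg _

lemma frob_sq {m n : ℕ} (A : Matrix (Fin m) (Fin n) ℝ) :
    frob A ^ 2 = ∑ i, ∑ j, (A i j) ^ 2 := by
  rw [frob, Real.sq_sqrt]
  positivity

lemma frob_transpose {m n : ℕ} (A : Matrix (Fin m) (Fin n) ℝ) : frob Aᵀ = frob A := by
  rw [frob, frob, Finset.sum_comm]
  rfl

section FrobArith
attribute [local instance] Matrix.frobeniusSeminormedAddCommGroup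
attribute [local instance] Matrix.frobeniusNormedSpace

lemma frob_add_le {m n : ℕ} (A B : Matrix (Fin m) (Fin n) ℝ) :
    frob (A + B) ≤ frob A + frob B := by
  simp only [frob_eq_norm]; exact norm_add_le _ _

lemma frob_smul {m n : ℕ} (c : ℝ) (A : Matrix (Fin m) (Fin n) ℝ) :
    frob (c • A) = |c| * frob A := by
  simp only [frob_eq_norm]
  rw [norm_smul, Real.norm_eq_abs]

lemma frob_mul_le {m n k : ℕ} (A : Matrix (Fin m) (Fin n) ℝ) (B : Matrix (Fin n) (Fin k) ℝ) :
    frob (A * B) ≤ frob A * frob B := by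
  simp only [frob_eq_norm]; exact Matrix.frobenius_norm_mul A B

end FrobArith


lemma sqrt_mulVec_le {m n : ℕ} (A : Matrix (Fin m) (Fin n) ℝ) (v : Fin n → ℝ) :
    Real.sqrt (∑ i, (A *ᵥ v) i ^ 2) ≤ frob A * Real.sqrt (∑ j, v j ^ 2) := by
  have key : ∑ i, (A *ᵥ v) i ^ 2 ≤ (∑ i, ∑ j, (A i j) ^ 2) * (∑ j, v j ^ 2) := by
    rw [Finset.sum_mul]
    refine Finset.sum_le_sum fun i _ => ?_
    exact Finset.sum_mul_sq_le_sq_mul_sq Finset.univ (fun j => A i j) v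
  calc Real.sqrt (∑ i, (A *ᵥ v) i ^ 2) ≤
      Real.sqrt ((∑ i, ∑ j, (A i j) ^ 2) * (∑ j, v j ^ 2)) := Real.sqrt_le_sqrt key
    _ = frob A * Real.sqrt (∑ j, v j ^ 2) := by
        rw [Real.sqrt_mul (by positivity)]; rfl

section Mixed
open scoped Matrix.Norms.L2Operator

lemma opn_le_frob {m n : ℕ} (A : Matrix (Fin m) (Fin n) ℝ) : opn A ≤ frob A := by
  rw [opn_eq_norm, Matrix.l2_opNorm_def]
  refine ContinuousLinearMap.opNorm_le_bound _ (frob_nonneg A) fun x => ?_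
  have happ : (LinearEquiv.trans Matrix.toEuclideanLin LinearMap.toContinuousLinearMap A) x
      = (WithLp.equiv 2 (Fin m → ℝ)).symm (A *ᵥ (WithLp.equiv 2 (Fin n → ℝ)) x) := rfl
  have e1 : ∀ (k : ℕ) (v : Fin k → ℝ),
      ‖(WithLp.equiv 2 (Fin k → ℝ)).symm v‖ = Real.sqrt (∑ i, v i ^ 2) := by
    intro k v
    rw [EuclideanSpace.norm_eq]
    congr 1
    exact Finset.sum_congr rfl fun i _ => by
      rw [show ((WithLp.equiv 2 (Fin k → ℝ)).symm v).ofLp i = v i from rfl, Real.norm_eq_abs, sq_abs]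
  have hx : ‖x‖ = Real.sqrt (∑ j, ((WithLp.equiv 2 (Fin n → ℝ)) x) j ^ 2) := by
    rw [show x = (WithLp.equiv 2 (Fin n → ℝ)).symm ((WithLp.equiv 2 (Fin n → ℝ)) x) by simp]
    rw [e1]
    simp
  rw [happ, e1, hx]
  exact sqrt_mulVec_le A _

lemma frob_mul_le_opn {m n k : ℕ} (A : Matrix (Fin m) (Fin n) ℝ)
    (B : Matrix (Fin n) (Fin k) ℝ) : frob (A * B) ≤ opn A * frob B := by
  have colbound : ∀ j, ∑ i, ((A * B) i j) ^ 2 ≤ opn A ^ 2 * ∑ l, (B l j) ^ 2 := by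
    intro j
    have h := opn_mulVec A (fun l => B l j)
    have h1 : ∑ i, ((A * B) i j) ^ 2 = ∑ i, (A *ᵥ (fun l => B l j)) i ^ 2 := by
      refine Finset.sum_congr rfl fun i _ => ?_
      simp [Matrix.mul_apply, Matrix.mulVec, dotProduct]
    rw [h1]
    have h2 := pow_le_pow_left₀ (Real.sqrt_nonneg _) h 2
    rw [Real.sq_sqrt (by positivity), mul_pow, Real.sq_sqrt (by positivity)] at h2
    exact h2
  have tot : frob (A * B) ^ 2 ≤ (opn A * frob B) ^ 2 := by
    rw [frob_sq, mul_pow, frob_sq, Finset.sum_comm]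
    calc ∑ j, ∑ i, ((A * B) i j) ^ 2
        ≤ ∑ j, opn A ^ 2 * ∑ l, (B l j) ^ 2 :=
          Finset.sum_le_sum fun j _ => colbound j
      _ = opn A ^ 2 * ∑ l, ∑ j, (B l j) ^ 2 := by
          rw [← Finset.mul_sum, Finset.sum_comm]
  have h3 := Real.sqrt_le_sqrt tot
  rwa [Real.sqrt_sq (frob_nonneg _),
    Real.sqrt_sq (mul_nonneg (opn_nonneg _) (frob_nonneg _))] at h3

end Mixed

lemma key_identity {n p : ℕ} (A D G : Matrix (Fin n) (Fin p) ℝ) (X' : Matrix (Fin p) (Fin p) ℝ)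
    (η β : ℝ) (hX : Aᵀ * A = 1 + X') (hXT : X'ᵀ = X') (hG : G = D + β • (A * X')) :
    (A - η • G)ᵀ * (A - η • G) - 1
    = ((1 - 2*η*β) • X' + (-(2*η*β)) • (X' * X'))
      + ((-η) • (Aᵀ * D + Dᵀ * A)) + (η^2) • (Gᵀ * G) := by
  have e1 : (A - η • G)ᵀ * (A - η • G) - 1
      = (Aᵀ * A - 1) - η • (Aᵀ * G) - η • (Gᵀ * A) + (η*η) • (Gᵀ * G) := by
    simp only [transpose_sub, transpose_smul, Matrix.sub_mul, Matrix.mul_sub,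
      Matrix.smul_mul, Matrix.mul_smul, smul_smul]
    module
  have e2 : Aᵀ * G = Aᵀ * D + β • (X' + X' * X') := by
    rw [hG, Matrix.mul_add, Matrix.mul_smul, ← Matrix.mul_assoc, hX,
      Matrix.add_mul, Matrix.one_mul]
  have e3 : Gᵀ * A = Dᵀ * A + β • (X' + X' * X') := by
    rw [hG, transpose_add, transpose_smul, transpose_mul, hXT, Matrix.add_mul,
      Matrix.smul_mul, Matrix.mul_assoc, hX, Matrix.mul_add, Matrix.mul_one]
  rw [e1, e2, e3, hX]
  module

set_option maxHeartbeats 1000000 in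
lemma step_lemma {n p : ℕ} (A D : Matrix (Fin n) (Fin p) ℝ) (η β M₂ : ℝ)
    (hD : frob D ≤ M₂) (hβ : β ≥ 60 * M₂) (hβ' : 0 < β) (hη : 0 < η)
    (hη' : η ≤ 1 / (2 * β)) (hX : frob (Aᵀ * A - 1) ≤ 1 / 6) :
    frob ((A - η • (D + β • (A * (Aᵀ * A - 1))))ᵀ
      * (A - η • (D + β • (A * (Aᵀ * A - 1)))) - 1) ≤ 1 / 6 := by
  set X : Matrix (Fin p) (Fin p) ℝ := Aᵀ * A - 1 with hXdef
  set G : Matrix (Fin n) (Fin p) ℝ := D + β • (A * X) with hGdef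
  have hXT : Xᵀ = X := by
    rw [hXdef, transpose_sub, transpose_mul, transpose_transpose, transpose_one]
  have hXA : Aᵀ * A = 1 + X := by rw [hXdef]; abel
  have hid := key_identity A D G X η β hXA hXT hGdef
  rw [hid]
  -- bounds
  have hM₂0 : 0 ≤ M₂ := le_trans (frob_nonneg D) hD
  have hh : frob X ≤ 1 / 6 := hX
  have hh0 : 0 ≤ frob X := frob_nonneg X
  have hs0 : 0 ≤ opn A := opn_nonneg A
  have hs2 : opn A * opn A ≤ 7 / 6 := by
    rw [← opn_transpose_mul_self, hXA]
    calc opn ((1 : Matrix (Fin p) (Fin p) ℝ) + X) ≤ opn 1 + opn X := opn_add_le _ _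
      _ ≤ 1 + frob X := add_le_add opn_one_le (opn_le_frob X)
      _ ≤ 7 / 6 := by linarith
  have hs : opn A ≤ 11 / 10 := by nlinarith [sq_nonneg (opn A - 11/10)]
  -- frob of the pieces
  have hAD : frob (Aᵀ * D) ≤ opn A * M₂ := by
    calc frob (Aᵀ * D) ≤ opn Aᵀ * frob D := frob_mul_le_opn _ _
      _ ≤ opn A * M₂ := by rw [opn_transpose]; exact mul_le_mul_of_nonneg_left hD hs0
  have hDA : frob (Dᵀ * A) ≤ opn A * M₂ := by
    have : Dᵀ * A = (Aᵀ * D)ᵀ := by rw [transpose_mul, transpose_transpose]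
    rw [this, frob_transpose]; exact hAD
  have hG : frob G ≤ M₂ + β * (opn A * frob X) := by
    rw [hGdef]
    calc frob (D + β • (A * X)) ≤ frob D + frob (β • (A * X)) := frob_add_le _ _
      _ = frob D + β * frob (A * X) := by rw [frob_smul, abs_of_pos hβ']
      _ ≤ M₂ + β * (opn A * frob X) := by
          have := frob_mul_le_opn A X
          have hb := mul_le_mul_of_nonneg_left this (le_of_lt hβ')
          linarith
  have hG0 : 0 ≤ frob G := frob_nonneg G
  have hGG : frob (Gᵀ * G) ≤ frob G * frob G := by
    calc frob (Gᵀ * G) ≤ frob Gᵀ * frob G := frob_mul_le _ _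
      _ = frob G * frob G := by rw [frob_transpose]
  have hXX : frob (X * X) ≤ frob X * frob X := frob_mul_le _ _
  have hηβ : η * β ≤ 1 / 2 := by
    rw [le_div_iff₀ (by linarith : (0:ℝ) < 2 * β)] at hη'
    nlinarith
  -- assemble
  have main : frob ((((1 - 2*η*β) • X + (-(2*η*β)) • (X * X))
      + ((-η) • (Aᵀ * D + Dᵀ * A))) + (η^2) • (Gᵀ * G))
      ≤ ((1 - 2*η*β) * frob X + (2*η*β) * (frob X * frob X))
        + η * (frob (Aᵀ * D) + frob (Dᵀ * A)) + η^2 * (frob G * frob G) := by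
    calc frob ((((1 - 2*η*β) • X + (-(2*η*β)) • (X * X))
          + ((-η) • (Aᵀ * D + Dᵀ * A))) + (η^2) • (Gᵀ * G))
        ≤ frob (((1 - 2*η*β) • X + (-(2*η*β)) • (X * X)) + ((-η) • (Aᵀ * D + Dᵀ * A)))
          + frob ((η^2) • (Gᵀ * G)) := frob_add_le _ _
      _ ≤ (frob ((1 - 2*η*β) • X) + frob ((-(2*η*β)) • (X * X)))
          + frob ((-η) • (Aᵀ * D + Dᵀ * A)) + frob ((η^2) • (Gᵀ * G)) := by
          have h1 := frob_add_le (((1 - 2*η*β) • X + (-(2*η*β)) • (X * X))) ((-η) • (Aᵀ * D + Dᵀ * A))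
          have h2 := frob_add_le ((1 - 2*η*β) • X) ((-(2*η*β)) • (X * X))
          linarith
      _ ≤ ((1 - 2*η*β) * frob X + (2*η*β) * (frob X * frob X))
          + η * (frob (Aᵀ * D) + frob (Dᵀ * A)) + η^2 * (frob G * frob G) := by
          rw [frob_smul, frob_smul, frob_smul, frob_smul]
          have ha1 : |1 - 2*η*β| = 1 - 2*η*β := abs_of_nonneg (by linarith)
          have ha2 : |(-(2*η*β))| = 2*η*β := by
            rw [abs_neg]; exact abs_of_nonneg (by nlinarith)
          have ha3 : |(-η)| = η := by rw [abs_neg]; exact abs_of_pos hη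
          have ha4 : |η^2| = η^2 := abs_of_nonneg (sq_nonneg η)
          rw [ha1, ha2, ha3, ha4]
          have hb1 := frob_add_le (Aᵀ * D) (Dᵀ * A)
          have hc1 : η * frob (Aᵀ * D + Dᵀ * A) ≤ η * (frob (Aᵀ * D) + frob (Dᵀ * A)) :=
            mul_le_mul_of_nonneg_left hb1 (le_of_lt hη)
          have hc2 : (2*η*β) * frob (X * X) ≤ (2*η*β) * (frob X * frob X) :=
            mul_le_mul_of_nonneg_left hXX (by nlinarith)
          have hc3 : η^2 * frob (Gᵀ * G) ≤ η^2 * (frob G * frob G) :=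
            mul_le_mul_of_nonneg_left hGG (sq_nonneg η)
          linarith
  refine le_trans main ?_
  -- final numeric estimate
  have hηβ0 : 0 ≤ η * β := mul_nonneg hη.le hβ'.le
  have hsh : opn A * frob X ≤ 11 / 60 := by
    have := mul_le_mul hs hh hh0 (by norm_num : (0:ℝ) ≤ 11/10)
    linarith
  have hGb : frob G ≤ β / 5 := by
    have h1 : β * (opn A * frob X) ≤ β * (11/60) :=
      mul_le_mul_of_nonneg_left hsh hβ'.le
    linarith
  have t1 : (1 - 2*η*β) * frob X + (2*η*β) * (frob X * frob X)
      ≤ 1/6 - (5/18) * (η*β) := by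
    have e := mul_le_mul_of_nonneg_left hh (show (0:ℝ) ≤ 1 - 2*η*β by linarith)
    have f : frob X * frob X ≤ 1/36 :=
      le_trans (mul_le_mul hh hh hh0 (by norm_num)) (by norm_num)
    have g := mul_le_mul_of_nonneg_left f (show (0:ℝ) ≤ 2*η*β by linarith)
    linarith
  have t2 : η * (frob (Aᵀ * D) + frob (Dᵀ * A)) ≤ (11/300) * (η*β) := by
    have hsM : opn A * M₂ ≤ (11/10) * M₂ := mul_le_mul_of_nonneg_right hs hM₂0
    have hb : frob (Aᵀ * D) + frob (Dᵀ * A) ≤ 11/300 * β := by linarith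
    have := mul_le_mul_of_nonneg_left hb hη.le
    linarith [mul_le_mul_of_nonneg_left (le_refl ((11:ℝ)/300*β)) hη.le]
  have t3 : η^2 * (frob G * frob G) ≤ (1/50) * (η*β) := by
    have hg2 : frob G * frob G ≤ (β/5) * (β/5) :=
      mul_le_mul hGb hGb hG0 (by positivity)
    have h4 := mul_le_mul_of_nonneg_left hg2 (sq_nonneg η)
    have h5 : η^2 * ((β/5) * (β/5)) = (η*β) * (η*β) / 25 := by ring
    have h6 := mul_le_mul_of_nonneg_left hηβ hηβ0
    linarith
  linarith [mul_pos hη hβ']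
theorem stmt_15 {n p : ℕ} (Y D : ℕ → Matrix (Fin n) (Fin p) ℝ)
    (η : ℕ → ℝ) (β M₂ : ℝ)
    (hM₂ : ∀ k, frob (D k) ≤ M₂)
    (hβ : β ≥ 60 * M₂) (hβ' : 0 < β)
    (hη : ∀ k, 0 < η k) (hη' : ∀ k, η k ≤ 1 / (2 * β))
    (h0 : frob ((Y 0)ᵀ * Y 0 - 1) ≤ 1 / 6)
    (hrec : ∀ k, Y (k + 1) =
      Y k - η k • (D k + β • (Y k * ((Y k)ᵀ * Y k - 1)))) :
    ∀ k, frob ((Y k)ᵀ * Y k - 1) ≤ 1 / 6 := by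
  intro k
  induction k with
  | zero => exact h0
  | succ k ih =>
    rw [hrec k]
    exact step_lemma (Y k) (D k) (η k) β M₂ (hM₂ k) hβ hβ' (hη k) (hη' k) ih
end

section
/- Among mappings of the form Ã(X) = X(α_0 I_p + α_1 X^T X + α_2 (X^T X)^2) with real coefficients satisfying α_0 + α_1 + α_2 = 1 and α_0 + 3α_1 + 5α_2 = 0, the choice (α_0, α_1, α_2) = (15/8, -5/4, 3/8) is the unique one for which the scalar function ψ(t) = α_0 t + α_1 t^3 + α_2 t^5 is monotone (nondecreasing) on all of ℝ. -/
open Matrix Filter Topology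

theorem stmt_19 (α₀ α₁ α₂ : ℝ) (h1 : α₀ + α₁ + α₂ = 1)
    (h2 : α₀ + 3 * α₁ + 5 * α₂ = 0) :
    Monotone (fun t : ℝ => α₀ * t + α₁ * t ^ 3 + α₂ * t ^ 5) ↔
      (α₀, α₁, α₂) = (15 / 8, -5 / 4, 3 / 8) := by
  have hα₀ : α₀ = 3/2 + α₂ := by linarith
  have hα₁ : α₁ = -1/2 - 2*α₂ := by linarith
  constructor
  · intro hm
    set g : ℝ → ℝ := fun t => α₂*t^3 + 2*α₂*t^2 + (α₂ - 1/2)*t - 1 with hg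
    have key : ∀ t : ℝ, α₀ * t + α₁ * t ^ 3 + α₂ * t ^ 5 - 1 = (t-1)^2 * g t := by
      intro t; simp only [hg, hα₀, hα₁]; ring
    have hpos : ∀ t : ℝ, 1 < t → 0 ≤ g t := by
      intro t ht
      have hmt : α₀ * 1 + α₁ * 1 ^ 3 + α₂ * 1 ^ 5 ≤ α₀ * t + α₁ * t ^ 3 + α₂ * t ^ 5 :=
        hm (le_of_lt ht)
      have hk := key t
      have hsq : (0:ℝ) < (t-1)^2 := pow_two_pos_of_ne_zero (by intro h; apply absurd ht; simp; nlinarith)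
      have hfd : 0 ≤ (t-1)^2 * g t := by nlinarith
      by_contra hcon
      push_neg at hcon
      nlinarith [mul_pos hsq (neg_pos.mpr hcon)]
    have hneg : ∀ t : ℝ, t < 1 → g t ≤ 0 := by
      intro t ht
      have hmt : α₀ * t + α₁ * t ^ 3 + α₂ * t ^ 5 ≤ α₀ * 1 + α₁ * 1 ^ 3 + α₂ * 1 ^ 5 :=
        hm (le_of_lt ht)
      have hk := key t
      have hsq : (0:ℝ) < (t-1)^2 := pow_two_pos_of_ne_zero (by intro h; apply absurd ht; simp; nlinarith)
      have hfd : (t-1)^2 * g t ≤ 0 := by nlinarith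
      by_contra hcon
      push_neg at hcon
      nlinarith [mul_pos hsq hcon]
    have hgc : Continuous g := by fun_prop
    have tnd : Tendsto (fun n : ℕ => (1 + 1/(n+1) : ℝ)) atTop (𝓝 1) := by
      have := tendsto_one_div_add_atTop_nhds_zero_nat (𝕜 := ℝ)
      simpa using tendsto_const_nhds.add this
    have tnd2 : Tendsto (fun n : ℕ => (1 - 1/(n+1) : ℝ)) atTop (𝓝 1) := by
      have := tendsto_one_div_add_atTop_nhds_zero_nat (𝕜 := ℝ)
      simpa using tendsto_const_nhds.sub this
    have hge : 0 ≤ g 1 :=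
      ge_of_tendsto' ((hgc.tendsto 1).comp tnd) (fun n => hpos _ (by
        have : (0:ℝ) < 1/(n+1) := by positivity
        linarith))
    have hle : g 1 ≤ 0 :=
      le_of_tendsto' ((hgc.tendsto 1).comp tnd2) (fun n => hneg _ (by
        have : (0:ℝ) < 1/(n+1) := by positivity
        linarith))
    have hg1 : g 1 = 4*α₂ - 3/2 := by simp [hg]; ring
    have hs : α₂ = 3/8 := by rw [hg1] at hge hle; linarith
    have e0 : α₀ = 15/8 := by rw [hα₀, hs]; norm_num
    have e1 : α₁ = -5/4 := by rw [hα₁, hs]; norm_num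
    simp [e0, e1, hs]
  · intro heq
    obtain ⟨e0, e1, e2⟩ : α₀ = 15/8 ∧ α₁ = -5/4 ∧ α₂ = 3/8 := by
      simpa [Prod.ext_iff] using heq
    subst e0 e1 e2
    have hd : ∀ t : ℝ, HasDerivAt (fun t : ℝ => 15/8 * t + -5/4 * t ^ 3 + 3/8 * t ^ 5)
        (15/8 * (t^2-1)^2) t := by
      intro t
      have h := (((hasDerivAt_id t).const_mul (15/8 : ℝ)).add
        ((hasDerivAt_pow 3 t).const_mul (-5/4 : ℝ))).add
        ((hasDerivAt_pow 5 t).const_mul (3/8 : ℝ))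
      exact h.congr_deriv (by push_cast; ring)
    have hdf : Differentiable ℝ (fun t : ℝ => 15/8 * t + -5/4 * t ^ 3 + 3/8 * t ^ 5) :=
      fun t => (hd t).differentiableAt
    have hmono : Monotone (fun t : ℝ => 15/8 * t + -5/4 * t ^ 3 + 3/8 * t ^ 5) := by
      apply monotone_of_deriv_nonneg hdf
      intro x
      rw [(hd x).deriv]
      positivity
    convert hmono using 2 <;> norm_num
end
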